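/- If fₙ, f ∈ 𝓔 and ℍ(fₙ, f) → 0, then max_{x∈[0,1]} fₙ(x) → max_{x∈[0,1]} f(x). -/
import Mathlib


open Set Metric Filter

def hypo (f : ℝ → ℝ) : Set (EuclideanSpace ℝ (Fin 2)) :=
  {p | p 0 ∈ Set.Icc (0:ℝ) 1 ∧ 0 ≤ p 1 ∧ p 1 ≤ f (p 0)}

noncomputable def HH (f g : ℝ → ℝ) : ℝ := Metric.hausdorffDist (hypo f) (hypo g)

def memE (f : ℝ → ℝ) : Prop :=
  (∀ x ∈ Set.Icc (0:ℝ) 1, 0 ≤ f x) ∧ UpperSemicontinuousOn f (Set.Icc (0:ℝ) 1)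

lemma usc_bddAbove {s : Set ℝ} {f : ℝ → ℝ} (hs : IsCompact s)
    (hf : UpperSemicontinuousOn f s) : BddAbove (f '' s) := by
  have key : ∀ x ∈ s, ∃ u : Set ℝ, IsOpen u ∧ x ∈ u ∧ ∀ y ∈ u ∩ s, f y < f x + 1 := by
    intro x hx
    have := hf x hx (f x + 1) (by linarith)
    rcases mem_nhdsWithin.mp this with ⟨u, hu, hxu, hus⟩
    exact ⟨u, hu, hxu, fun y hy => hus hy⟩
  choose! u hopen hmem hlt using key
  obtain ⟨t, hcov⟩ := hs.elim_nhds_subcover' (fun x hx => u x)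
    (fun x hx => (hopen x hx).mem_nhds (hmem x hx))
  rcases t.eq_empty_or_nonempty with rfl | ht
  · have : s = ∅ := by
      apply eq_empty_of_subset_empty
      intro x hx; simpa using hcov hx
    simp [this]
  · refine ⟨t.sup' ht (fun x => f x + 1), ?_⟩
    rintro _ ⟨y, hy, rfl⟩
    have := hcov hy
    simp only [Set.mem_iUnion] at this
    obtain ⟨x, hxt, hyu⟩ := this
    have h1 : f y < f x + 1 := hlt x x.2 y ⟨hyu, hy⟩
    have h2 : f x.1 + 1 ≤ t.sup' ht (fun x => f x.1 + 1) := Finset.le_sup' (fun x => f x.1 + 1) hxt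
    linarith

noncomputable def pt (a b : ℝ) : EuclideanSpace ℝ (Fin 2) :=
  (WithLp.equiv 2 (Fin 2 → ℝ)).symm ![a, b]

@[simp] lemma pt_zero (a b : ℝ) : pt a b 0 = a := rfl
@[simp] lemma pt_one (a b : ℝ) : pt a b 1 = b := rfl

lemma coord_dist_le (p q : EuclideanSpace ℝ (Fin 2)) (i : Fin 2) :
    |p i - q i| ≤ dist p q := by
  rw [EuclideanSpace.dist_eq, ← Real.sqrt_sq_eq_abs]
  apply Real.sqrt_le_sqrt
  have : (p i - q i) ^ 2 = dist (p i) (q i) ^ 2 := by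
    rw [Real.dist_eq, sq_abs]
  rw [this]
  exact Finset.single_le_sum (f := fun j => dist (p j) (q j) ^ 2)
    (fun j _ => sq_nonneg _) (Finset.mem_univ i)

lemma hypo_nonempty {f : ℝ → ℝ} (hf : memE f) : (hypo f).Nonempty := by
  refine ⟨pt 0 0, ?_, ?_, ?_⟩ <;> simp
  · exact hf.1 0 (by simp)

lemma hypo_bounded {f : ℝ → ℝ} (hf : memE f) : Bornology.IsBounded (hypo f) := by
  obtain ⟨M, hM⟩ := usc_bddAbove isCompact_Icc hf.2
  have : hypo f ⊆ Metric.closedBall 0 (Real.sqrt (1 + max M 0 ^ 2)) := by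
    rintro p ⟨h0, h1, h2⟩
    rw [Metric.mem_closedBall, dist_zero_right, EuclideanSpace.norm_eq]
    apply Real.sqrt_le_sqrt
    rw [Fin.sum_univ_two]
    have hp0 : ‖p 0‖ ^ 2 ≤ 1 := by
      rw [Real.norm_eq_abs, sq_abs]
      nlinarith [h0.1, h0.2]
    have hfM : f (p 0) ≤ M := hM ⟨p 0, h0, rfl⟩
    have hp1 : ‖p 1‖ ^ 2 ≤ max M 0 ^ 2 := by
      rw [Real.norm_eq_abs, sq_abs]
      have : p 1 ≤ max M 0 := le_trans h2 (le_trans hfM (le_max_left _ _))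
      nlinarith [le_max_right M 0]
    linarith
  exact (Metric.isBounded_closedBall).subset this

lemma sSup_le_of_HH_lt {g f : ℝ → ℝ} (hg : memE g) (hf : memE f) {ε : ℝ} (hε : 0 < ε)
    (h : Metric.hausdorffDist (hypo g) (hypo f) < ε) :
    sSup (g '' Set.Icc (0:ℝ) 1) ≤ sSup (f '' Set.Icc (0:ℝ) 1) + ε := by
  have hfin : EMetric.hausdorffEdist (hypo g) (hypo f) ≠ ⊤ :=
    Metric.hausdorffEdist_ne_top_of_nonempty_of_bounded (hypo_nonempty hg)
      (hypo_nonempty hf) (hypo_bounded hg) (hypo_bounded hf)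
  have hbddf : BddAbove (f '' Set.Icc (0:ℝ) 1) := usc_bddAbove isCompact_Icc hf.2
  apply Real.sSup_le
  · rintro _ ⟨x, hx, rfl⟩
    have hp : pt x (g x) ∈ hypo g := ⟨hx, hg.1 x hx, le_refl _⟩
    obtain ⟨q, hq, hdq⟩ := Metric.exists_dist_lt_of_hausdorffDist_lt hp h hfin
    have h1 : |pt x (g x) 1 - q 1| ≤ dist (pt x (g x)) q := coord_dist_le _ _ 1
    have h2 : q 1 ≤ sSup (f '' Set.Icc (0:ℝ) 1) :=
      le_trans hq.2.2 (le_csSup hbddf ⟨q 0, hq.1, rfl⟩)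
    simp only [pt_one] at h1
    have := abs_sub_abs_le_abs_sub (g x) (q 1)
    have h3 : g x - q 1 ≤ |g x - q 1| := le_abs_self _
    linarith
  · have h0 : (0:ℝ) ≤ sSup (f '' Set.Icc (0:ℝ) 1) :=
      le_trans (hf.1 0 (by simp)) (le_csSup hbddf ⟨0, by simp, rfl⟩)
    linarith

/-- If `ℍ(fₙ, f) → 0` then the maxima converge:
`max_{x∈[0,1]} fₙ(x) → max_{x∈[0,1]} f(x)`. -/
theorem stmt_13 (F : ℕ → ℝ → ℝ) (f : ℝ → ℝ) (hF : ∀ n, memE (F n)) (hf : memE f)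
    (hconv : Filter.Tendsto (fun n => HH (F n) f) Filter.atTop (nhds 0)) :
    Filter.Tendsto (fun n => sSup (F n '' Set.Icc (0:ℝ) 1)) Filter.atTop
      (nhds (sSup (f '' Set.Icc (0:ℝ) 1))) := by
  rw [Metric.tendsto_atTop]
  intro ε hε
  have h2 : (0:ℝ) < ε / 2 := by linarith
  obtain ⟨N, hN⟩ := (Metric.tendsto_atTop.mp hconv) (ε / 2) h2
  refine ⟨N, fun n hn => ?_⟩
  have hlt : HH (F n) f < ε / 2 := by
    have := hN n hn
    rw [Real.dist_eq, sub_zero] at this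
    calc HH (F n) f ≤ |HH (F n) f| := le_abs_self _
    _ < ε / 2 := this
  have ha : sSup (F n '' Set.Icc (0:ℝ) 1) ≤ sSup (f '' Set.Icc (0:ℝ) 1) + ε / 2 :=
    sSup_le_of_HH_lt (hF n) hf h2 hlt
  have hb : sSup (f '' Set.Icc (0:ℝ) 1) ≤ sSup (F n '' Set.Icc (0:ℝ) 1) + ε / 2 := by
    apply sSup_le_of_HH_lt hf (hF n) h2
    rw [Metric.hausdorffDist_comm]
    exact hlt
  rw [Real.dist_eq, abs_sub_lt_iff]
  constructor <;> linarith
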